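/- Let j : ℍ² → M₂(ℝ) be defined by j(x+iy) = [[x/y, −(x²+y²)/y], [1/y, −x/y]] for y > 0, and for a tangent vector (a,b) ∈ ℝ² let Dj_z(a,b) = a·∂j/∂x + b·∂j/∂y denote the directional derivative of j at z = x+iy. Then for all z = x+iy with y > 0 and all (a,b), (a′,b′) ∈ ℝ²: (1/2)·tr(Dj_z(a,b)·Dj_z(a′,b′)) = (a a′ + b b′)/y², and −(1/2)·tr(Dj_z(a,b)·j(z)·Dj_z(a′,b′)) = −(a b′ − b a′)/y². In other words, j pulls back the Kähler structure ⟨A,B⟩ = (1/2)tr(AB), Ω(A,B) = −(1/2)tr(A·j(z)·B) on 𝒥(ℝ²) to the hyperbolic Kähler structure (g_{ℍ²}, −dx∧dy/y²) on ℍ². -/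

import Mathlib

open Matrix

/-- The map `j : ℍ² → M₂(ℝ)` in real coordinates `(x,y)` with `y > 0`. -/
noncomputable def jmat2 (x y : ℝ) : Matrix (Fin 2) (Fin 2) ℝ :=
  !![x / y, -(x ^ 2 + y ^ 2) / y;
     1 / y, -x / y]

/-- The directional derivative `Dj_z(a,b) = a·∂j/∂x + b·∂j/∂y` of `j` at `z = x+iy`,
computed entrywise. -/
noncomputable def Dj (x y a b : ℝ) : Matrix (Fin 2) (Fin 2) ℝ :=
  a • Matrix.of (fun i j => deriv (fun s => jmat2 s y i j) x) +
  b • Matrix.of (fun i j => deriv (fun s => jmat2 x s i j) y)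

lemma Dj_eq (x y a b : ℝ) (hy : 0 < y) :
    Dj x y a b = !![a / y - b * x / y ^ 2, -2 * a * x / y + b * (x ^ 2 / y ^ 2 - 1);
                    -b / y ^ 2, -a / y + b * x / y ^ 2] := by
  have hy' : y ≠ 0 := hy.ne'
  have d00x : deriv (fun s : ℝ => jmat2 s y 0 0) x = 1 / y := by
    simp only [jmat2, Matrix.cons_val', Matrix.cons_val_zero, Matrix.empty_val',
      Matrix.cons_val_fin_one, Matrix.head_cons, Matrix.head_fin_const]
    simpa using ((hasDerivAt_id x).div_const y).deriv
  have d01x : deriv (fun s : ℝ => jmat2 s y 0 1) x = -2 * x / y := by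
    simp only [jmat2, Matrix.cons_val', Matrix.cons_val_zero, Matrix.cons_val_one,
      Matrix.empty_val', Matrix.cons_val_fin_one, Matrix.head_cons, Matrix.head_fin_const]
    have h : HasDerivAt (fun s : ℝ => -(s ^ 2 + y ^ 2) / y) (-2 * x / y) x := by
      have := (((hasDerivAt_pow 2 x).add_const (y ^ 2)).neg).div_const y
      exact this.congr_deriv (by push_cast; ring)
    simpa using h.deriv
  have d10x : deriv (fun s : ℝ => jmat2 s y 1 0) x = 0 := by
    simp [jmat2]
  have d11x : deriv (fun s : ℝ => jmat2 s y 1 1) x = -(1 / y) := by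
    simp only [jmat2, Matrix.cons_val', Matrix.cons_val_one, Matrix.cons_val_zero,
      Matrix.empty_val', Matrix.cons_val_fin_one, Matrix.head_cons, Matrix.head_fin_const]
    have h : HasDerivAt (fun s : ℝ => -s / y) (-(1 / y)) x := by
      have := ((hasDerivAt_id x).neg).div_const y
      exact this.congr_deriv (by ring)
    simpa using h.deriv
  have d00y : deriv (fun s : ℝ => jmat2 x s 0 0) y = -(x / y ^ 2) := by
    simp only [jmat2, Matrix.cons_val', Matrix.cons_val_zero, Matrix.empty_val',
      Matrix.cons_val_fin_one, Matrix.head_cons, Matrix.head_fin_const]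
    have h : HasDerivAt (fun s : ℝ => x / s) (-(x / y ^ 2)) y := by
      have := (hasDerivAt_inv hy').const_mul x
      simp only [div_eq_mul_inv]
      exact this.congr_deriv (by ring)
    simpa using h.deriv
  have d01y : deriv (fun s : ℝ => jmat2 x s 0 1) y = x ^ 2 / y ^ 2 - 1 := by
    simp only [jmat2, Matrix.cons_val', Matrix.cons_val_zero, Matrix.cons_val_one,
      Matrix.empty_val', Matrix.cons_val_fin_one, Matrix.head_cons, Matrix.head_fin_const]
    have h : HasDerivAt (fun s : ℝ => -(x ^ 2 + s ^ 2) / s) (x ^ 2 / y ^ 2 - 1) y := by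
      have heq : (fun s : ℝ => -(x ^ 2 + s ^ 2) / s) =ᶠ[nhds y]
          (fun s : ℝ => -(x ^ 2) * s⁻¹ - s) := by
        filter_upwards [isOpen_ne.mem_nhds (x := y) hy'] with s hs
        field_simp; ring
      have h1 : HasDerivAt (fun s : ℝ => -(x ^ 2) * s⁻¹ - s)
          (-(x ^ 2) * (-(y ^ 2)⁻¹) - 1) y :=
        (((hasDerivAt_inv hy').const_mul (-(x ^ 2)))).sub (hasDerivAt_id y)
      have h2 := h1.congr_of_eventuallyEq heq
      exact h2.congr_deriv (by ring)
    simpa using h.deriv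
  have d10y : deriv (fun s : ℝ => jmat2 x s 1 0) y = -(1 / y ^ 2) := by
    simp only [jmat2, Matrix.cons_val', Matrix.cons_val_one, Matrix.cons_val_zero,
      Matrix.empty_val', Matrix.cons_val_fin_one, Matrix.head_cons, Matrix.head_fin_const]
    have h : HasDerivAt (fun s : ℝ => 1 / s) (-(1 / y ^ 2)) y := by
      simpa [one_div] using hasDerivAt_inv hy'
    simpa using h.deriv
  have d11y : deriv (fun s : ℝ => jmat2 x s 1 1) y = x / y ^ 2 := by
    simp only [jmat2, Matrix.cons_val', Matrix.cons_val_one, Matrix.cons_val_zero,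
      Matrix.empty_val', Matrix.cons_val_fin_one, Matrix.head_cons, Matrix.head_fin_const]
    have h : HasDerivAt (fun s : ℝ => -x / s) (x / y ^ 2) y := by
      have := (hasDerivAt_inv hy').const_mul (-x)
      simp only [div_eq_mul_inv]
      exact this.congr_deriv (by ring)
    simpa using h.deriv
  ext i j
  fin_cases i <;> fin_cases j <;>
    simp [Dj, d00x, d01x, d10x, d11x, d00y, d01y, d10y, d11y] <;> ring

theorem stmt1 :
    ∀ x y : ℝ, 0 < y → ∀ a b a' b' : ℝ,
      (1 / 2) * (Dj x y a b * Dj x y a' b').trace = (a * a' + b * b') / y ^ 2 ∧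
      -((1 / 2) * (Dj x y a b * jmat2 x y * Dj x y a' b').trace) =
        -((a * b' - b * a') / y ^ 2) := by
  intro x y hy a b a' b'
  have hy' : y ≠ 0 := hy.ne'
  rw [Dj_eq x y a b hy, Dj_eq x y a' b' hy]
  constructor <;>
  · simp [jmat2, Matrix.trace_fin_two, Matrix.mul_apply, Fin.sum_univ_two]
    field_simp
    ring
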